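/- For a matrix polynomial P(λ) = Σ_{l=0}^d A_l λ^l with A_l ∈ ℂ^{n×n}, an approximate eigenpair (x̃, λ̃) with x̃ ≠ 0, and tolerance matrices E_l with Σ_l |λ̃|^l ‖E_l‖_2 > 0, the backward error η(x̃, λ̃) = min{ε : (P(λ̃) + ΔP(λ̃))x̃ = 0, ‖ΔA_l‖_2 ≤ ε‖E_l‖_2 for all l} equals ‖P(λ̃)x̃‖_2 / (α̃ ‖x̃‖_2), where α̃ = Σ_l |λ̃|^l ‖E_l‖_2. -/

import Mathlib

set_option maxHeartbeats 1000000
set_option synthInstance.maxHeartbeats 200000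


/-- The operator 2-norm of a complex matrix. -/
noncomputable def opNorm {n : ℕ} (A : Matrix (Fin n) (Fin n) ℂ) : ℝ :=
  ‖(Matrix.toEuclideanCLM (𝕜 := ℂ) A : EuclideanSpace ℂ (Fin n) →L[ℂ] EuclideanSpace ℂ (Fin n))‖

lemma clm_vecMulVec (n : ℕ) (u : Fin n → ℂ) (v z : EuclideanSpace ℂ (Fin n)) :
    Matrix.toEuclideanCLM (𝕜:=ℂ) (Matrix.vecMulVec u (star ((WithLp.equiv 2 _) v))) z
      = (inner ℂ v z : ℂ) • (WithLp.equiv 2 (Fin n → ℂ)).symm u := by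
  ext i
  show ((Matrix.vecMulVec u (star ((WithLp.equiv 2 _) v))).mulVec ((WithLp.equiv 2 _) z)) i = _
  simp [Matrix.vecMulVec, Matrix.mulVec, dotProduct, PiLp.inner_apply,
    RCLike.inner_apply]
  rw [Finset.sum_mul]
  exact Finset.sum_congr rfl fun j _ => by ring

lemma clm_smul {n : ℕ} (c : ℂ) (M : Matrix (Fin n) (Fin n) ℂ) :
    Matrix.toEuclideanCLM (𝕜:=ℂ) (c • M) = c • Matrix.toEuclideanCLM (𝕜:=ℂ) M :=
  map_smul (Matrix.toEuclideanCLM (𝕜:=ℂ)) c M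

lemma opNorm_smul {n : ℕ} (c : ℂ) (M : Matrix (Fin n) (Fin n) ℂ) :
    opNorm (c • M) = ‖c‖ * opNorm M := by
  rw [opNorm, clm_smul, norm_smul c (Matrix.toEuclideanCLM (𝕜:=ℂ) M)]; rfl

/-- for `P(λ) = Σ_{l=0}^d A_l λ^l`, an approximate eigenpair `(x̃, λ̃)`
with `x̃ ≠ 0`, and tolerances `E_l` with `α̃ = Σ_l |λ̃|^l ‖E_l‖₂ > 0`, the backward
error `η(x̃, λ̃) = min { ε | (P(λ̃) + ΔP(λ̃)) x̃ = 0, ‖ΔA_l‖₂ ≤ ε ‖E_l‖₂ }` equals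
`‖P(λ̃) x̃‖₂ / (α̃ ‖x̃‖₂)`. -/
theorem backward_error_formula (n d : ℕ)
    (A E : Fin (d + 1) → Matrix (Fin n) (Fin n) ℂ)
    (lam : ℂ) (x : EuclideanSpace ℂ (Fin n)) (hx : x ≠ 0)
    (alpha : ℝ) (halpha : alpha = ∑ l : Fin (d + 1), ‖lam‖ ^ (l : ℕ) * opNorm (E l))
    (halphapos : 0 < alpha)
    (Plam : Matrix (Fin n) (Fin n) ℂ)
    (hPlam : Plam = ∑ l : Fin (d + 1), lam ^ (l : ℕ) • A l) :
    sInf {ε : ℝ | ∃ ΔA : Fin (d + 1) → Matrix (Fin n) (Fin n) ℂ,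
        Matrix.toEuclideanCLM (𝕜 := ℂ)
            (Plam + ∑ l : Fin (d + 1), lam ^ (l : ℕ) • ΔA l) x = 0 ∧
        ∀ l : Fin (d + 1), opNorm (ΔA l) ≤ ε * opNorm (E l)} =
      ‖Matrix.toEuclideanCLM (𝕜 := ℂ) Plam x‖ / (alpha * ‖x‖) := by
  set y : EuclideanSpace ℂ (Fin n) := Matrix.toEuclideanCLM (𝕜 := ℂ) Plam x with hy
  set r : ℝ := ‖y‖ / (alpha * ‖x‖) with hr
  have hxn : (0:ℝ) < ‖x‖ := norm_pos_iff.mpr hx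
  have hax : (0:ℝ) < alpha * ‖x‖ := mul_pos halphapos hxn
  set S : Set ℝ := {ε : ℝ | ∃ ΔA : Fin (d + 1) → Matrix (Fin n) (Fin n) ℂ,
        Matrix.toEuclideanCLM (𝕜 := ℂ)
            (Plam + ∑ l : Fin (d + 1), lam ^ (l : ℕ) • ΔA l) x = 0 ∧
        ∀ l : Fin (d + 1), opNorm (ΔA l) ≤ ε * opNorm (E l)} with hS
  -- lower bound
  have hlb : ∀ ε ∈ S, r ≤ ε := by
    rintro ε ⟨ΔA, h0, hb⟩
    set D : Matrix (Fin n) (Fin n) ℂ := ∑ l : Fin (d + 1), lam ^ (l : ℕ) • ΔA l with hD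
    have h1 : y = - Matrix.toEuclideanCLM (𝕜 := ℂ) D x := by
      rw [map_add] at h0
      have := congrArg (fun v => v - Matrix.toEuclideanCLM (𝕜 := ℂ) D x) h0
      simpa [hy, eq_neg_iff_add_eq_zero] using h0
    have hTD : ‖(Matrix.toEuclideanCLM (𝕜 := ℂ) D :
        EuclideanSpace ℂ (Fin n) →L[ℂ] EuclideanSpace ℂ (Fin n))‖
        ≤ ∑ l : Fin (d + 1), ‖lam‖ ^ (l : ℕ) * opNorm (ΔA l) := by
      rw [hD, map_sum]
      refine le_trans (norm_sum_le _ _) (Finset.sum_le_sum fun l _ => ?_)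
      rw [clm_smul, norm_smul (lam ^ (l : ℕ)) (Matrix.toEuclideanCLM (𝕜:=ℂ) (ΔA l)),
        norm_pow]
      rfl
    have h2 : ‖y‖ ≤ ε * (alpha * ‖x‖) := by
      rw [h1, norm_neg]
      calc ‖Matrix.toEuclideanCLM (𝕜 := ℂ) D x‖
          ≤ ‖(Matrix.toEuclideanCLM (𝕜 := ℂ) D :
              EuclideanSpace ℂ (Fin n) →L[ℂ] EuclideanSpace ℂ (Fin n))‖ * ‖x‖ :=
            ContinuousLinearMap.le_opNorm _ _
        _ ≤ (∑ l : Fin (d + 1), ‖lam‖ ^ (l : ℕ) * opNorm (ΔA l)) * ‖x‖ := by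
            gcongr
        _ ≤ (∑ l : Fin (d + 1), ‖lam‖ ^ (l : ℕ) * (ε * opNorm (E l))) * ‖x‖ := by
            refine mul_le_mul_of_nonneg_right (Finset.sum_le_sum fun l _ => ?_) (norm_nonneg x)
            exact mul_le_mul_of_nonneg_left (hb l) (pow_nonneg (norm_nonneg _) _)
        _ = ε * (alpha * ‖x‖) := by
            rw [halpha, Finset.sum_mul, Finset.sum_mul, Finset.mul_sum]
            exact Finset.sum_congr rfl fun l _ => by ring
    rw [hr, div_le_iff₀ hax]
    exact h2
  -- membership
  have hmem : r ∈ S := by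
    set c : Fin (d + 1) → ℂ := fun l =>
      if lam = 0 then (if (l : ℕ) = 0 then 1 else 0)
      else (((‖lam‖ : ℝ) : ℂ) / lam) ^ (l : ℕ) with hc
    have hkey : ∀ l : Fin (d + 1),
        lam ^ (l : ℕ) * c l = ((‖lam‖ ^ (l : ℕ) : ℝ) : ℂ) := by
      intro l
      by_cases h0 : lam = 0
      · rcases Nat.eq_zero_or_pos (l : ℕ) with h | h
        · simp [hc, h0, (Fin.ext h : l = 0)]
        · simp [hc, h0, h.ne', zero_pow h.ne']
      · have : ((‖lam‖ : ℝ) : ℂ) ≠ 0 := by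
          simpa using (norm_ne_zero_iff.mpr h0)
        simp only [hc, if_neg h0]
        rw [div_pow, Complex.ofReal_pow]
        field_simp
    have hcle : ∀ l : Fin (d + 1), ‖c l‖ ≤ 1 := by
      intro l
      by_cases h0 : lam = 0
      · simp only [hc, if_pos h0]
        split <;> simp
      · simp only [hc, if_neg h0]
        rw [norm_pow, norm_div]
        have : ‖((‖lam‖ : ℝ) : ℂ)‖ = ‖lam‖ := by
          simp [abs_of_nonneg (norm_nonneg lam)]
        rw [this, div_self (by simpa using norm_ne_zero_iff.mpr h0)]
        simp
    set x' : Fin n → ℂ := (WithLp.equiv 2 (Fin n → ℂ)) x with hx'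
    set u : Fin n → ℂ := fun i => (-((‖x‖^2 : ℝ) : ℂ))⁻¹ * y i with hu
    set M : Matrix (Fin n) (Fin n) ℂ := Matrix.vecMulVec u (star x') with hM
    refine ⟨fun l => (c l * ((opNorm (E l) / alpha : ℝ) : ℂ)) • M, ?_, ?_⟩
    · -- the eigen-equation
      have hsum : (∑ l : Fin (d + 1), lam ^ (l : ℕ) •
          ((c l * ((opNorm (E l) / alpha : ℝ) : ℂ)) • M)) = M := by
        have : ∀ l : Fin (d + 1), lam ^ (l : ℕ) •
            ((c l * ((opNorm (E l) / alpha : ℝ) : ℂ)) • M)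
            = (((‖lam‖ ^ (l : ℕ) * opNorm (E l) / alpha : ℝ) : ℂ)) • M := by
          intro l
          rw [smul_smul, ← mul_assoc, hkey l]
          push_cast
          ring_nf
        rw [Finset.sum_congr rfl fun l _ => this l, ← Finset.sum_smul, ← Complex.ofReal_sum]
        have : (∑ l : Fin (d + 1), ‖lam‖ ^ (l : ℕ) * opNorm (E l) / alpha) = 1 := by
          rw [← Finset.sum_div, ← halpha, div_self halphapos.ne']
        rw [this, Complex.ofReal_one, one_smul]
      rw [hsum, map_add, ContinuousLinearMap.add_apply]
      have hMx : Matrix.toEuclideanCLM (𝕜 := ℂ) M x = -y := by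
        rw [hM, clm_vecMulVec]
        have hinner : (inner ℂ x x : ℂ) = ((‖x‖^2 : ℝ) : ℂ) := by
          rw [inner_self_eq_norm_sq_to_K]; norm_cast
        have husymm : (WithLp.equiv 2 (Fin n → ℂ)).symm u
            = (-((‖x‖^2 : ℝ) : ℂ))⁻¹ • y := by
          ext i; simp [hu]
        rw [hinner, husymm, smul_smul]
        have hne : ((‖x‖^2 : ℝ) : ℂ) ≠ 0 := by
          simpa using pow_ne_zero 2 (by exact_mod_cast hxn.ne' : (‖x‖ : ℝ) ≠ 0)
        rw [show (-((‖x‖^2 : ℝ) : ℂ))⁻¹ = -(((‖x‖^2 : ℝ) : ℂ))⁻¹ by ring,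
          mul_neg, mul_inv_cancel₀ hne]
        simp
      rw [hMx, ← hy, add_neg_cancel]
    · -- norm bounds
      intro l
      have hMnorm : opNorm M ≤ ‖y‖ / ‖x‖ := by
        rw [opNorm]
        refine ContinuousLinearMap.opNorm_le_bound _ (div_nonneg (norm_nonneg _) hxn.le) ?_
        intro z
        rw [hM, clm_vecMulVec, norm_smul]
        have husymm : ‖(WithLp.equiv 2 (Fin n → ℂ)).symm u‖ = (‖x‖^2)⁻¹ * ‖y‖ := by
          have : (WithLp.equiv 2 (Fin n → ℂ)).symm u = (-((‖x‖^2 : ℝ) : ℂ))⁻¹ • y := by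
            ext i; simp [hu]
          rw [this, norm_smul]
          congr 1
          rw [norm_inv, norm_neg]
          simp [abs_of_nonneg (sq_nonneg ‖x‖)]
        rw [husymm]
        calc ‖(inner ℂ x z : ℂ)‖ * ((‖x‖^2)⁻¹ * ‖y‖)
            ≤ ‖x‖ * ‖z‖ * ((‖x‖^2)⁻¹ * ‖y‖) := by
              gcongr
              exact norm_inner_le_norm x z
          _ = ‖y‖ / ‖x‖ * ‖z‖ := by field_simp
      have hEnn : (0:ℝ) ≤ opNorm (E l) := norm_nonneg _
      have hMnn : (0:ℝ) ≤ opNorm M := norm_nonneg _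
      have hcoe : ‖((opNorm (E l) / alpha : ℝ) : ℂ)‖ = opNorm (E l) / alpha := by
        rw [Complex.norm_real, Real.norm_eq_abs,
          abs_of_nonneg (div_nonneg hEnn halphapos.le)]
      have h1 : ‖c l‖ * ‖((opNorm (E l) / alpha : ℝ) : ℂ)‖ ≤ 1 * (opNorm (E l) / alpha) := by
        rw [hcoe]
        exact mul_le_mul_of_nonneg_right (hcle l) (div_nonneg hEnn halphapos.le)
      rw [opNorm_smul, norm_mul]
      calc ‖c l‖ * ‖((opNorm (E l) / alpha : ℝ) : ℂ)‖ * opNorm M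
          ≤ 1 * (opNorm (E l) / alpha) * (‖y‖ / ‖x‖) :=
            mul_le_mul h1 hMnorm hMnn (by positivity)
        _ = r * opNorm (E l) := by rw [hr]; field_simp
  exact le_antisymm (csInf_le ⟨r, hlb⟩ hmem) (le_csInf ⟨r, hmem⟩ hlb)
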